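/- Let f be a monic polynomial over ℂ of degree 4 with roots r₁, r₂, r₃, r₄ (with multiplicity), and define the normalized elementary symmetric functions r̄ := e₁/4, r̄₂ := e₂/6, r̄₃ := e₃/4, r̄₄ := e₄, where eᵢ is the i-th elementary symmetric polynomial in r₁,…,r₄. Then the average of f over the 3 roots of f' (counted with multiplicity) equals −9·r̄⁴ + 18·r̄²·r̄₂ − 4·r̄·r̄₃ − 6·r̄₂² + r̄₄. -/

import Mathlib

open Polynomial

/-- For a monic quartic with roots `r₁,…,r₄` and normalized elementary symmetric
functions `r̄ = e₁/4`, `r̄₂ = e₂/6`, `r̄₃ = e₃/4`, `r̄₄ = e₄`, the average of `f` over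
the 3 roots of `f'` equals `−9·r̄⁴ + 18·r̄²·r̄₂ − 4·r̄·r̄₃ − 6·r̄₂² + r̄₄`. -/
theorem quartic_mean_over_first_derivative_roots (r₁ r₂ r₃ r₄ : ℂ) (f : Polynomial ℂ)
    (hf : f = (X - C r₁) * (X - C r₂) * (X - C r₃) * (X - C r₄))
    (rb rb2 rb3 rb4 : ℂ)
    (h1 : rb = (r₁ + r₂ + r₃ + r₄) / 4)
    (h2 : rb2 = (r₁ * r₂ + r₁ * r₃ + r₁ * r₄ + r₂ * r₃ + r₂ * r₄ + r₃ * r₄) / 6)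
    (h3 : rb3 = (r₁ * r₂ * r₃ + r₁ * r₂ * r₄ + r₁ * r₃ * r₄ + r₂ * r₃ * r₄) / 4)
    (h4 : rb4 = r₁ * r₂ * r₃ * r₄) :
    ((derivative f).roots.map (fun t => f.eval t)).sum / 3
      = -9 * rb ^ 4 + 18 * rb ^ 2 * rb2 - 4 * rb * rb3 - 6 * rb2 ^ 2 + rb4 := by
  have hsplit : (derivative f).Splits := IsAlgClosed.splits _
  have hd : derivative f = C 4 * X ^ 3 - C (3 * (r₁ + r₂ + r₃ + r₄)) * X ^ 2
      + C (2 * (r₁ * r₂ + r₁ * r₃ + r₁ * r₄ + r₂ * r₃ + r₂ * r₄ + r₃ * r₄)) * X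
      - C (r₁ * r₂ * r₃ + r₁ * r₂ * r₄ + r₁ * r₃ * r₄ + r₂ * r₃ * r₄) := by
    subst hf
    simp only [derivative_mul, derivative_sub, derivative_X, derivative_C, map_mul, map_add,
      map_ofNat]
    ring
  have hdeg : (derivative f).natDegree = 3 := by
    rw [hd]; compute_degree!
  have hcard : (derivative f).roots.card = 3 := by
    rw [← hdeg]; exact (splits_iff_card_roots.mp hsplit)
  obtain ⟨t1, t2, t3, ht⟩ := Multiset.card_eq_three.mp hcard
  have hlead : (derivative f).leadingCoeff = 4 := by
    rw [Polynomial.leadingCoeff, hdeg, hd]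
    simp only [coeff_sub, coeff_add, coeff_C_mul, coeff_X_pow, coeff_C, coeff_X]
    norm_num
  have hfac := hsplit.eq_prod_roots
  rw [hlead, ht] at hfac
  have heval : ∀ x : ℂ, 4 * x ^ 3 - 3 * (r₁ + r₂ + r₃ + r₄) * x ^ 2
      + 2 * (r₁ * r₂ + r₁ * r₃ + r₁ * r₄ + r₂ * r₃ + r₂ * r₄ + r₃ * r₄) * x
      - (r₁ * r₂ * r₃ + r₁ * r₂ * r₄ + r₁ * r₃ * r₄ + r₂ * r₃ * r₄)
      = 4 * ((x - t1) * ((x - t2) * (x - t3))) := by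
    intro x
    have h := congrArg (Polynomial.eval x) hfac
    rw [hd] at h
    simpa [Multiset.map_cons, Multiset.prod_cons, eval_mul, eval_sub, eval_X, eval_C,
      mul_assoc] using h
  rw [ht, hf]
  simp only [Multiset.insert_eq_cons, Multiset.map_cons, Multiset.map_singleton,
    Multiset.sum_cons, Multiset.sum_singleton, eval_mul, eval_sub, eval_X, eval_C]
  subst h1 h2 h3 h4
  have hD1 := heval 1
  have hDm1 := heval (-1)
  have hD0 := heval 0
  set E1 := r₁ + r₂ + r₃ + r₄ with hE1
  set E2 := r₁ * r₂ + r₁ * r₃ + r₁ * r₄ + r₂ * r₃ + r₂ * r₄ + r₃ * r₄ with hE2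
  set E3 := r₁ * r₂ * r₃ + r₁ * r₂ * r₄ + r₁ * r₃ * r₄ + r₂ * r₃ * r₄ with hE3
  set AA := 4 * (t1 + t2 + t3) - 3 * E1 with hAA
  set BB := 2 * (t1 * t2 + t1 * t3 + t2 * t3) - E2 with hBB
  set CC := 4 * (t1 * t2 * t3) - E3 with hCC
  set α := CC / 4 - (3 / 8) * E1 * BB + (9 / 128 * E1 ^ 2 - 1 / 16 * E2) * AA
    - (1 / 8) * AA * BB + (1 / 32) * E1 * AA ^ 2 + (1 / 256) * AA ^ 3 with hα
  linear_combination ((α / 2 - BB / 8) / 3) * hD1 + ((α / 2 + BB / 8) / 3) * hDm1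
    + (-α / 3) * hD0
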